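/- Let d, n, m, p be positive integers and β > 0. Let D : ℝ^d × ℝ → ℂ^{n×n}, B : ℝ^d → ℂ^{n×m}, C : ℝ^d → ℂ^{p×n} be continuously differentiable on a neighborhood of a point (μ*, ω*). Then there exist η_μ > 0, η_ω > 0 and γ > 0 such that for every positive integer k and all V, W ∈ ℂ^{n×k} with orthonormal columns satisfying ‖(Wᴴ D(μ*, ω*) V) x‖ ≥ β for all unit vectors x ∈ ℂ^k, the following hold: (a) Wᴴ D(μ, ω) V is invertible for all μ with ‖μ − μ*‖ ≤ η_μ and all ω with |ω − ω*| ≤ η_ω; (b) the reduced transfer function H^{V,W}(μ, ω) := (C(μ) V)(Wᴴ D(μ, ω) V)⁻¹ (Wᴴ B(μ)) satisfies ‖H^{V,W}(μ̃, ω) − H^{V,W}(μ, ω)‖ ≤ γ ‖μ̃ − μ‖ and ‖H^{V,W}(μ, ω̃) − H^{V,W}(μ, ω)‖ ≤ γ |ω̃ − ω| for all μ̃, μ in the closed ball of radius η_μ about μ* and all ω̃, ω in the closed interval of radius η_ω about ω*. The constants η_μ, η_ω, γ do not depend on k, V, W. -/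

import Mathlib

open Matrix Metric
open scoped Matrix.Norms.L2Operator

section Aux

lemma myOpNormLe {m n : Type*} [Fintype m] [Fintype n] [DecidableEq m] [DecidableEq n]
    {A : Matrix m n ℂ} {c : ℝ} (hc : 0 ≤ c)
    (h : ∀ x : EuclideanSpace ℂ n, ‖Matrix.toEuclideanLin A x‖ ≤ c * ‖x‖) : ‖A‖ ≤ c := by
  rw [Matrix.l2_opNorm_def]
  exact ContinuousLinearMap.opNorm_le_bound _ hc h

lemma myLeOpNorm {m n : Type*} [Fintype m] [Fintype n] [DecidableEq m] [DecidableEq n]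
    (A : Matrix m n ℂ) (x : EuclideanSpace ℂ n) : ‖Matrix.toEuclideanLin A x‖ ≤ ‖A‖ * ‖x‖ :=
  ((Matrix.toEuclideanLin.trans LinearMap.toContinuousLinearMap) A).le_opNorm x

lemma myNormOne {k : Type*} [Fintype k] [DecidableEq k] : ‖(1 : Matrix k k ℂ)‖ ≤ 1 := by
  rw [Matrix.cstar_norm_def, _root_.map_one]
  exact ContinuousLinearMap.norm_id_le

lemma myColsOrtho {n k : Type*} [Fintype n] [Fintype k] [DecidableEq n] [DecidableEq k]
    (V : Matrix n k ℂ) (h : Vᴴ * V = 1) : ‖V‖ ≤ 1 := by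
  have h2 : ‖V‖ * ‖V‖ = ‖(1 : Matrix k k ℂ)‖ := by rw [← h, Matrix.l2_opNorm_conjTranspose_mul_self]
  nlinarith [norm_nonneg V, myNormOne (k := k)]

lemma myMulLin {k : Type*} [Fintype k] [DecidableEq k] (A B : Matrix k k ℂ)
    (x : EuclideanSpace ℂ k) :
    Matrix.toEuclideanLin (A * B) x = Matrix.toEuclideanLin A (Matrix.toEuclideanLin B x) := by
  simp [← Matrix.coe_toEuclideanCLM_eq_toEuclideanLin, _root_.map_mul]

lemma myIsUnit {k : Type*} [Fintype k] [DecidableEq k] {A : Matrix k k ℂ}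
    (h : Function.Injective (Matrix.toEuclideanLin A)) : IsUnit A := by
  rw [Matrix.isUnit_iff_isUnit_det, isUnit_iff_ne_zero]
  intro hdet
  obtain ⟨v, hv, hv0⟩ := (Matrix.exists_mulVec_eq_zero_iff).2 hdet
  apply hv
  have := h (a₁ := (WithLp.equiv 2 _).symm v) (a₂ := 0) ?_
  · simpa using congrArg (WithLp.equiv 2 _) this
  · rw [map_zero]
    apply (WithLp.equiv 2 _).symm.injective.eq_iff.mpr at hv0
    simpa [Matrix.toEuclideanLin_apply_piLp_toLp] using hv0

lemma myUnitBound {k : Type*} [Fintype k] [DecidableEq k] {A : Matrix k k ℂ} {c : ℝ} (hc : 0 < c)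
    (h : ∀ x : EuclideanSpace ℂ k, c * ‖x‖ ≤ ‖Matrix.toEuclideanLin A x‖) :
    IsUnit A ∧ ‖A⁻¹‖ ≤ 1 / c := by
  have hinj : Function.Injective (Matrix.toEuclideanLin A) := by
    intro x y hxy
    have h3 := h (x - y)
    rw [map_sub, hxy, sub_self, norm_zero] at h3
    have : ‖x - y‖ ≤ 0 := by nlinarith [norm_nonneg (x - y)]
    rw [← sub_eq_zero]
    exact norm_le_zero_iff.mp this
  have hU := myIsUnit hinj
  refine ⟨hU, myOpNormLe (by positivity) fun y => ?_⟩
  have hdet : IsUnit A.det := (Matrix.isUnit_iff_isUnit_det _).mp hU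
  have h1 : A * A⁻¹ = 1 := Matrix.mul_nonsing_inv A hdet
  have h2 : Matrix.toEuclideanLin A (Matrix.toEuclideanLin A⁻¹ y) = y := by
    rw [← myMulLin, h1]
    simp [← Matrix.coe_toEuclideanCLM_eq_toEuclideanLin, _root_.map_one]
  have := h (Matrix.toEuclideanLin A⁻¹ y)
  rw [h2] at this
  rw [div_mul_eq_mul_div, le_div_iff₀ hc]
  linarith

lemma myInvDiff {k : Type*} [Fintype k] [DecidableEq k] {A A' : Matrix k k ℂ}
    (hA : IsUnit A) (hA' : IsUnit A') :
    A'⁻¹ - A⁻¹ = A'⁻¹ * (A - A') * A⁻¹ := by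
  have h1 : A * A⁻¹ = 1 := Matrix.mul_nonsing_inv A ((Matrix.isUnit_iff_isUnit_det _).mp hA)
  have h2 : A'⁻¹ * A' = 1 := Matrix.nonsing_inv_mul A' ((Matrix.isUnit_iff_isUnit_det _).mp hA')
  rw [Matrix.mul_sub, Matrix.sub_mul, Matrix.mul_assoc, h1, Matrix.mul_one, h2, Matrix.one_mul]

lemma myIdentity {k m p : Type*} [Fintype k] [Fintype m] [Fintype p] [DecidableEq k]
    [DecidableEq m] [DecidableEq p]
    (P P' : Matrix p k ℂ) (A A' : Matrix k k ℂ) (R R' : Matrix k m ℂ)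
    (hA : IsUnit A) (hA' : IsUnit A') :
    P' * A'⁻¹ * R' - P * A⁻¹ * R =
      (P' - P) * A'⁻¹ * R' + P * (A'⁻¹ * (A - A') * A⁻¹) * R' + P * A⁻¹ * (R' - R) := by
  rw [← myInvDiff hA hA']
  simp only [Matrix.sub_mul, Matrix.mul_sub, Matrix.mul_assoc]
  abel

lemma myScale {k m : Type*} [Fintype k] [Fintype m] [DecidableEq k] [DecidableEq m]
    {A : Matrix m k ℂ} {β : ℝ}
    (h : ∀ x : EuclideanSpace ℂ k, ‖x‖ = 1 → β ≤ ‖Matrix.toEuclideanLin A x‖) :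
    ∀ x : EuclideanSpace ℂ k, β * ‖x‖ ≤ ‖Matrix.toEuclideanLin A x‖ := by
  intro x
  rcases eq_or_ne x 0 with rfl | hx
  · simp
  · have hxn : (0:ℝ) < ‖x‖ := norm_pos_iff.mpr hx
    have h1 : ‖((‖x‖⁻¹ : ℝ) : ℂ) • x‖ = 1 := by
      rw [norm_smul]
      simp [hxn.ne']
    have h2 := h _ h1
    rw [_root_.map_smul, norm_smul] at h2
    simp only [Complex.norm_real, Real.norm_eq_abs,
      abs_of_pos (by positivity : (0:ℝ) < ‖x‖⁻¹)] at h2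
    calc β * ‖x‖ ≤ (‖x‖⁻¹ * ‖Matrix.toEuclideanLin A x‖) * ‖x‖ := by nlinarith
    _ = ‖Matrix.toEuclideanLin A x‖ := by field_simp

lemma myPert {k : Type*} [Fintype k] [DecidableEq k] {A A' : Matrix k k ℂ} {c : ℝ}
    (hA : ∀ x : EuclideanSpace ℂ k, c * ‖x‖ ≤ ‖Matrix.toEuclideanLin A x‖)
    (hd : ‖A' - A‖ ≤ c / 2) :
    ∀ x : EuclideanSpace ℂ k, (c / 2) * ‖x‖ ≤ ‖Matrix.toEuclideanLin A' x‖ := by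
  intro x
  have h1 : ‖Matrix.toEuclideanLin (A' - A) x‖ ≤ (c/2) * ‖x‖ :=
    (myLeOpNorm _ x).trans (by nlinarith [norm_nonneg x])
  have h2 : Matrix.toEuclideanLin (A' - A) x =
      Matrix.toEuclideanLin A' x - Matrix.toEuclideanLin A x := by rw [map_sub]; rfl
  have h3 := hA x
  have := abs_le.mp (abs_norm_sub_norm_le (Matrix.toEuclideanLin A' x) (Matrix.toEuclideanLin A x))
  rw [← h2] at this
  linarith [this.1]

lemma myAssemble {k m p : Type*} [Fintype k] [Fintype m] [Fintype p] [DecidableEq k]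
    [DecidableEq m] [DecidableEq p]
    (P P' : Matrix p k ℂ) (A A' : Matrix k k ℂ) (R R' : Matrix k m ℂ)
    (hA : IsUnit A) (hA' : IsUnit A')
    (g mb mc t dP dA dR : ℝ)
    (hg : 0 ≤ g) (hmb : 0 ≤ mb) (hmc : 0 ≤ mc) (ht : 0 ≤ t)
    (hdP0 : 0 ≤ dP) (hdA0 : 0 ≤ dA) (hdR0 : 0 ≤ dR)
    (hGA : ‖A⁻¹‖ ≤ g) (hGA' : ‖A'⁻¹‖ ≤ g)
    (hP : ‖P‖ ≤ mc) (hR' : ‖R'‖ ≤ mb)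
    (hdP : ‖P' - P‖ ≤ dP * t) (hdA : ‖A - A'‖ ≤ dA * t) (hdR : ‖R' - R‖ ≤ dR * t) :
    ‖P' * A'⁻¹ * R' - P * A⁻¹ * R‖ ≤ (dP * g * mb + mc * g * dA * g * mb + mc * g * dR) * t := by
  have idty := myIdentity P P' A A' R R' hA hA'
  have n1 : ‖(P' - P) * A'⁻¹ * R'‖ ≤ (dP * t) * g * mb := by
    calc ‖(P' - P) * A'⁻¹ * R'‖ ≤ ‖(P' - P) * A'⁻¹‖ * ‖R'‖ := Matrix.l2_opNorm_mul _ _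
    _ ≤ (‖P' - P‖ * ‖A'⁻¹‖) * ‖R'‖ :=
        mul_le_mul_of_nonneg_right (Matrix.l2_opNorm_mul _ _) (norm_nonneg _)
    _ ≤ (dP * t) * g * mb := by
        apply mul_le_mul _ hR' (norm_nonneg _) (by positivity)
        exact mul_le_mul hdP hGA' (norm_nonneg _) (by positivity)
  have n2 : ‖P * (A'⁻¹ * (A - A') * A⁻¹) * R'‖ ≤ mc * (g * ((dA * t) * g)) * mb := by
    calc ‖P * (A'⁻¹ * (A - A') * A⁻¹) * R'‖ ≤ ‖P * (A'⁻¹ * (A - A') * A⁻¹)‖ * ‖R'‖ :=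
        Matrix.l2_opNorm_mul _ _
    _ ≤ (‖P‖ * ‖A'⁻¹ * (A - A') * A⁻¹‖) * ‖R'‖ :=
        mul_le_mul_of_nonneg_right (Matrix.l2_opNorm_mul _ _) (norm_nonneg _)
    _ ≤ (mc * (g * ((dA * t) * g))) * mb := by
        apply mul_le_mul _ hR' (norm_nonneg _) (by positivity)
        apply mul_le_mul hP _ (norm_nonneg _) hmc
        calc ‖A'⁻¹ * (A - A') * A⁻¹‖ ≤ ‖A'⁻¹ * (A - A')‖ * ‖A⁻¹‖ := Matrix.l2_opNorm_mul _ _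
        _ ≤ (‖A'⁻¹‖ * ‖A - A'‖) * ‖A⁻¹‖ :=
            mul_le_mul_of_nonneg_right (Matrix.l2_opNorm_mul _ _) (norm_nonneg _)
        _ ≤ g * ((dA * t) * g) := by
            rw [mul_assoc]
            apply mul_le_mul hGA' _ (by positivity) hg
            exact mul_le_mul hdA hGA (norm_nonneg _) (by positivity)
  have n3 : ‖P * A⁻¹ * (R' - R)‖ ≤ mc * g * (dR * t) := by
    calc ‖P * A⁻¹ * (R' - R)‖ ≤ ‖P * A⁻¹‖ * ‖R' - R‖ := Matrix.l2_opNorm_mul _ _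
    _ ≤ (‖P‖ * ‖A⁻¹‖) * ‖R' - R‖ :=
        mul_le_mul_of_nonneg_right (Matrix.l2_opNorm_mul _ _) (norm_nonneg _)
    _ ≤ mc * g * (dR * t) := by
        apply mul_le_mul _ hdR (norm_nonneg _) (by positivity)
        exact mul_le_mul hP hGA (norm_nonneg _) hmc
  calc ‖P' * A'⁻¹ * R' - P * A⁻¹ * R‖
      ≤ ‖(P' - P) * A'⁻¹ * R'‖ + ‖P * (A'⁻¹ * (A - A') * A⁻¹) * R'‖ + ‖P * A⁻¹ * (R' - R)‖ := by
        rw [idty]; exact (norm_add_le _ _).trans (by gcongr; exact norm_add_le _ _)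
  _ ≤ (dP * t) * g * mb + mc * (g * ((dA * t) * g)) * mb + mc * g * (dR * t) := by linarith
  _ = (dP * g * mb + mc * g * dA * g * mb + mc * g * dR) * t := by ring

end Aux

/-- **Uniform Lipschitz continuity of the reduced transfer functions (Lemma 3.2 (i)–(ii)).**
Let `D(μ, ω)`, `B(μ)`, `C(μ)` be continuously differentiable near `(μ*, ω*)`. Then there
are radii `η_μ, η_ω > 0` and a Lipschitz constant `γ > 0`, independent of the reduction
dimension `k` and of the matrices `V, W` with orthonormal columns for which the smallest
singular value of `Wᴴ D(μ*, ω*) V` is at least `β`, such that the compressed pencil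
`Wᴴ D(μ, ω) V` is invertible on the corresponding neighborhood and the reduced transfer
function `H^{V,W}(μ, ω) = (C(μ) V)(Wᴴ D(μ, ω) V)⁻¹(Wᴴ B(μ))` is `γ`-Lipschitz there in
`μ` and in `ω` separately (spectral norms throughout). -/
theorem stmt8 {d n m p : ℕ} (hd : 0 < d) (hn : 0 < n) (hm : 0 < m) (hp : 0 < p)
    (β : ℝ) (hβ : 0 < β)
    (D : EuclideanSpace ℝ (Fin d) × ℝ → Matrix (Fin n) (Fin n) ℂ)
    (B : EuclideanSpace ℝ (Fin d) → Matrix (Fin n) (Fin m) ℂ)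
    (C : EuclideanSpace ℝ (Fin d) → Matrix (Fin p) (Fin n) ℂ)
    (μs : EuclideanSpace ℝ (Fin d)) (ωs : ℝ)
    (UD : Set (EuclideanSpace ℝ (Fin d) × ℝ)) (hUD : UD ∈ nhds (μs, ωs))
    (hD : ContDiffOn ℝ 1 D UD)
    (UB : Set (EuclideanSpace ℝ (Fin d))) (hUB : UB ∈ nhds μs)
    (hB : ContDiffOn ℝ 1 B UB)
    (UC : Set (EuclideanSpace ℝ (Fin d))) (hUC : UC ∈ nhds μs)
    (hC : ContDiffOn ℝ 1 C UC) :
    ∃ ημ > (0 : ℝ), ∃ ηω > (0 : ℝ), ∃ γ > (0 : ℝ),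
      ∀ (k : ℕ) (V W : Matrix (Fin n) (Fin k) ℂ),
        Vᴴ * V = (1 : Matrix (Fin k) (Fin k) ℂ) →
        Wᴴ * W = (1 : Matrix (Fin k) (Fin k) ℂ) →
        (∀ x : EuclideanSpace ℂ (Fin k), ‖x‖ = 1 →
          β ≤ ‖Matrix.toEuclideanLin (Wᴴ * D (μs, ωs) * V) x‖) →
        (∀ μ ∈ closedBall μs ημ, ∀ ω ∈ Set.Icc (ωs - ηω) (ωs + ηω),
          IsUnit (Wᴴ * D (μ, ω) * V)) ∧
        (∀ μ' ∈ closedBall μs ημ, ∀ μ ∈ closedBall μs ημ,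
          ∀ ω ∈ Set.Icc (ωs - ηω) (ωs + ηω),
            ‖(C μ' * V) * (Wᴴ * D (μ', ω) * V)⁻¹ * (Wᴴ * B μ') -
                (C μ * V) * (Wᴴ * D (μ, ω) * V)⁻¹ * (Wᴴ * B μ)‖ ≤ γ * ‖μ' - μ‖) ∧
        (∀ μ ∈ closedBall μs ημ, ∀ ω' ∈ Set.Icc (ωs - ηω) (ωs + ηω),
          ∀ ω ∈ Set.Icc (ωs - ηω) (ωs + ηω),
            ‖(C μ * V) * (Wᴴ * D (μ, ω') * V)⁻¹ * (Wᴴ * B μ) -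
                (C μ * V) * (Wᴴ * D (μ, ω) * V)⁻¹ * (Wᴴ * B μ)‖ ≤ γ * |ω' - ω|) := by
  classical
  obtain ⟨KD, tD, htD, hLD⟩ := (hD.contDiffAt hUD).exists_lipschitzOnWith
  obtain ⟨KB, tB, htB, hLB⟩ := (hB.contDiffAt hUB).exists_lipschitzOnWith
  obtain ⟨KC, tC, htC, hLC⟩ := (hC.contDiffAt hUC).exists_lipschitzOnWith
  obtain ⟨εD, hεD, hεDsub⟩ := Metric.nhds_basis_closedBall.mem_iff.mp htD
  obtain ⟨εB, hεB, hεBsub⟩ := Metric.nhds_basis_closedBall.mem_iff.mp htB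
  obtain ⟨εC, hεC, hεCsub⟩ := Metric.nhds_basis_closedBall.mem_iff.mp htC
  set η : ℝ := min (min εD (min εB εC)) (β / (2 * (KD + 1))) with hηdef
  have hKD0 : (0:ℝ) ≤ KD := KD.coe_nonneg
  have hKB0 : (0:ℝ) ≤ KB := KB.coe_nonneg
  have hKC0 : (0:ℝ) ≤ KC := KC.coe_nonneg
  have hη0 : 0 < η := lt_min (lt_min hεD (lt_min hεB hεC)) (by positivity)
  -- membership facts for points in the region
  have hregion : ∀ μ ∈ closedBall μs η, ∀ ω ∈ Set.Icc (ωs - η) (ωs + η),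
      (μ, ω) ∈ tD ∧ dist (μ, ω) ((μs : EuclideanSpace ℝ (Fin d)), ωs) ≤ η := by
    intro μ hμ ω hω
    have hωb : ω ∈ closedBall ωs η := by rw [Real.closedBall_eq_Icc]; exact hω
    have hdist : dist (μ, ω) ((μs : EuclideanSpace ℝ (Fin d)), ωs) ≤ η := by
      rw [Prod.dist_eq]
      exact max_le (mem_closedBall.mp hμ) (mem_closedBall.mp hωb)
    refine ⟨hεDsub ?_, hdist⟩
    exact mem_closedBall.mpr (hdist.trans ((min_le_left _ _).trans (min_le_left _ _)))
  have hμmem : ∀ μ ∈ closedBall μs η, μ ∈ tB ∧ μ ∈ tC := by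
    intro μ hμ
    have h1 : dist μ μs ≤ η := mem_closedBall.mp hμ
    constructor
    · exact hεBsub (mem_closedBall.mpr (h1.trans
        ((min_le_left _ _).trans ((min_le_right _ _).trans (min_le_left _ _)))))
    · exact hεCsub (mem_closedBall.mpr (h1.trans
        ((min_le_left _ _).trans ((min_le_right _ _).trans (min_le_right _ _)))))
  set g : ℝ := 2 / β with hgdef
  have hg0 : 0 < g := by positivity
  set MB : ℝ := ‖B μs‖ + KB * η with hMBdef
  set MC : ℝ := ‖C μs‖ + KC * η with hMCdef
  have hMB0 : 0 ≤ MB := by positivity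
  have hMC0 : 0 ≤ MC := by positivity
  refine ⟨η, hη0, η, hη0,
    (KC * g * MB + MC * g * KD * g * MB + MC * g * KB) + 1, by positivity, ?_⟩
  intro k V W hV hW hσ
  have hVn : ‖V‖ ≤ 1 := myColsOrtho V hV
  have hWn : ‖Wᴴ‖ ≤ 1 := by rw [Matrix.l2_opNorm_conjTranspose]; exact myColsOrtho W hW
  have hbase := myScale hσ
  -- bound on compressed difference
  have hsand : ∀ X Y : Matrix (Fin n) (Fin n) ℂ,
      ‖Wᴴ * X * V - Wᴴ * Y * V‖ ≤ ‖X - Y‖ := by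
    intro X Y
    have he : Wᴴ * X * V - Wᴴ * Y * V = Wᴴ * (X - Y) * V := by
      rw [Matrix.mul_sub, Matrix.sub_mul]
    rw [he]
    calc ‖Wᴴ * (X - Y) * V‖ ≤ ‖Wᴴ * (X - Y)‖ * ‖V‖ := Matrix.l2_opNorm_mul _ _
    _ ≤ (‖Wᴴ‖ * ‖X - Y‖) * ‖V‖ :=
        mul_le_mul_of_nonneg_right (Matrix.l2_opNorm_mul _ _) (norm_nonneg _)
    _ ≤ (1 * ‖X - Y‖) * 1 := by
        apply mul_le_mul _ hVn (norm_nonneg _) (by positivity)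
        exact mul_le_mul_of_nonneg_right hWn (norm_nonneg _)
    _ = ‖X - Y‖ := by ring
  -- invertibility and inverse bound throughout the region
  have hkey : ∀ μ ∈ closedBall μs η, ∀ ω ∈ Set.Icc (ωs - η) (ωs + η),
      IsUnit (Wᴴ * D (μ, ω) * V) ∧ ‖(Wᴴ * D (μ, ω) * V)⁻¹‖ ≤ g := by
    intro μ hμ ω hω
    obtain ⟨hmem, hdist⟩ := hregion μ hμ ω hω
    have hmem0 : ((μs : EuclideanSpace ℝ (Fin d)), ωs) ∈ tD := mem_of_mem_nhds htD
    have hDd : ‖D (μ, ω) - D (μs, ωs)‖ ≤ β / 2 := by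
      have h1 : dist (D (μ, ω)) (D (μs, ωs)) ≤ KD * dist (μ, ω) (μs, ωs) :=
        hLD.dist_le_mul _ hmem _ hmem0
      rw [dist_eq_norm] at h1
      have h2 : (KD : ℝ) * dist (μ, ω) (μs, ωs) ≤ KD * η :=
        mul_le_mul_of_nonneg_left hdist hKD0
      have h3 : η ≤ β / (2 * (KD + 1)) := min_le_right _ _
      have h4 : (KD : ℝ) * η ≤ β / 2 := by
        have h5 : (KD : ℝ) * η ≤ KD * (β / (2 * (KD + 1))) :=
          mul_le_mul_of_nonneg_left h3 hKD0
        have h6 : (KD : ℝ) * (β / (2 * (KD + 1))) ≤ β / 2 := by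
          have h7 : (KD : ℝ) * (β / (2 * (KD + 1))) = (KD * β) / (2 * (KD + 1)) := by ring
          rw [h7, div_le_div_iff₀ (by positivity) (by norm_num)]
          nlinarith
        linarith
      linarith
    have hd2 : ‖Wᴴ * D (μ, ω) * V - Wᴴ * D (μs, ωs) * V‖ ≤ β / 2 :=
      (hsand _ _).trans hDd
    have hlow := myPert hbase hd2
    have := myUnitBound (by positivity : (0:ℝ) < β / 2) hlow
    refine ⟨this.1, this.2.trans_eq ?_⟩
    rw [hgdef]
    field_simp
  -- norm bounds for B and C factors on the region
  have hBb : ∀ μ ∈ closedBall μs η, ‖Wᴴ * B μ‖ ≤ MB := by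
    intro μ hμ
    have h1 : ‖B μ - B μs‖ ≤ KB * η := by
      have := hLB.dist_le_mul _ (hμmem μ hμ).1 _ (mem_of_mem_nhds htB)
      rw [dist_eq_norm] at this
      exact this.trans (mul_le_mul_of_nonneg_left (mem_closedBall.mp hμ) hKB0)
    have h2 : ‖B μ‖ ≤ MB := by
      have := norm_sub_norm_le (B μ) (B μs)
      rw [hMBdef]; linarith
    calc ‖Wᴴ * B μ‖ ≤ ‖Wᴴ‖ * ‖B μ‖ := Matrix.l2_opNorm_mul _ _
    _ ≤ 1 * MB := mul_le_mul hWn h2 (norm_nonneg _) (by norm_num)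
    _ = MB := one_mul _
  have hCb : ∀ μ ∈ closedBall μs η, ‖C μ * V‖ ≤ MC := by
    intro μ hμ
    have h1 : ‖C μ - C μs‖ ≤ KC * η := by
      have := hLC.dist_le_mul _ (hμmem μ hμ).2 _ (mem_of_mem_nhds htC)
      rw [dist_eq_norm] at this
      exact this.trans (mul_le_mul_of_nonneg_left (mem_closedBall.mp hμ) hKC0)
    have h2 : ‖C μ‖ ≤ MC := by
      have := norm_sub_norm_le (C μ) (C μs)
      rw [hMCdef]; linarith
    calc ‖C μ * V‖ ≤ ‖C μ‖ * ‖V‖ := Matrix.l2_opNorm_mul _ _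
    _ ≤ MC * 1 := mul_le_mul h2 hVn (norm_nonneg _) hMC0
    _ = MC := mul_one _
  refine ⟨fun μ hμ ω hω => (hkey μ hμ ω hω).1, ?_, ?_⟩
  · -- Lipschitz in μ
    intro μ' hμ' μ hμ ω hω
    obtain ⟨hU, hG⟩ := hkey μ hμ ω hω
    obtain ⟨hU', hG'⟩ := hkey μ' hμ' ω hω
    have ht0 : (0:ℝ) ≤ ‖μ' - μ‖ := norm_nonneg _
    have hdA : ‖Wᴴ * D (μ, ω) * V - Wᴴ * D (μ', ω) * V‖ ≤ KD * ‖μ' - μ‖ := by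
      refine (hsand _ _).trans ?_
      have h1 := hLD.dist_le_mul _ (hregion μ hμ ω hω).1 _ (hregion μ' hμ' ω hω).1
      rw [dist_eq_norm] at h1
      refine h1.trans ?_
      have h2 : dist ((μ : EuclideanSpace ℝ (Fin d)), ω) (μ', ω) = ‖μ' - μ‖ := by
        rw [Prod.dist_eq]
        simp [dist_eq_norm, norm_sub_rev μ μ']
      rw [h2]
    have hdP : ‖C μ' * V - C μ * V‖ ≤ KC * ‖μ' - μ‖ := by
      have he : C μ' * V - C μ * V = (C μ' - C μ) * V := by rw [Matrix.sub_mul]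
      rw [he]
      calc ‖(C μ' - C μ) * V‖ ≤ ‖C μ' - C μ‖ * ‖V‖ := Matrix.l2_opNorm_mul _ _
      _ ≤ ‖C μ' - C μ‖ * 1 := mul_le_mul_of_nonneg_left hVn (norm_nonneg _)
      _ = ‖C μ' - C μ‖ := mul_one _
      _ ≤ KC * ‖μ' - μ‖ := by
          have h1 := hLC.dist_le_mul _ (hμmem μ' hμ').2 _ (hμmem μ hμ).2
          rw [dist_eq_norm, dist_eq_norm] at h1
          exact h1
    have hdR : ‖Wᴴ * B μ' - Wᴴ * B μ‖ ≤ KB * ‖μ' - μ‖ := by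
      have he : Wᴴ * B μ' - Wᴴ * B μ = Wᴴ * (B μ' - B μ) := by rw [Matrix.mul_sub]
      rw [he]
      calc ‖Wᴴ * (B μ' - B μ)‖ ≤ ‖Wᴴ‖ * ‖B μ' - B μ‖ := Matrix.l2_opNorm_mul _ _
      _ ≤ 1 * ‖B μ' - B μ‖ := mul_le_mul_of_nonneg_right hWn (norm_nonneg _)
      _ = ‖B μ' - B μ‖ := one_mul _
      _ ≤ KB * ‖μ' - μ‖ := by
          have h1 := hLB.dist_le_mul _ (hμmem μ' hμ').1 _ (hμmem μ hμ).1
          rw [dist_eq_norm, dist_eq_norm] at h1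
          exact h1
    have hmain := myAssemble (C μ * V) (C μ' * V) (Wᴴ * D (μ, ω) * V) (Wᴴ * D (μ', ω) * V)
      (Wᴴ * B μ) (Wᴴ * B μ') hU hU' g MB MC ‖μ' - μ‖ KC KD KB hg0.le hMB0 hMC0 ht0
      hKC0 hKD0 hKB0 hG hG' (hCb μ hμ) (hBb μ' hμ') hdP hdA hdR
    refine hmain.trans ?_
    apply mul_le_mul_of_nonneg_right _ ht0
    linarith
  · -- Lipschitz in ω
    intro μ hμ ω' hω' ω hω
    obtain ⟨hU, hG⟩ := hkey μ hμ ω hω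
    obtain ⟨hU', hG'⟩ := hkey μ hμ ω' hω'
    have ht0 : (0:ℝ) ≤ |ω' - ω| := abs_nonneg _
    have hdA : ‖Wᴴ * D (μ, ω) * V - Wᴴ * D (μ, ω') * V‖ ≤ KD * |ω' - ω| := by
      refine (hsand _ _).trans ?_
      have h1 := hLD.dist_le_mul _ (hregion μ hμ ω hω).1 _ (hregion μ hμ ω' hω').1
      rw [dist_eq_norm] at h1
      refine h1.trans ?_
      have h2 : dist ((μ : EuclideanSpace ℝ (Fin d)), ω) (μ, ω') = |ω' - ω| := by
        rw [Prod.dist_eq]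
        simp [Real.dist_eq, abs_sub_comm ω ω']
      rw [h2]
    have hdP : ‖C μ * V - C μ * V‖ ≤ KC * |ω' - ω| := by
      simp only [sub_self]
      rw [norm_zero]
      positivity
    have hdR : ‖Wᴴ * B μ - Wᴴ * B μ‖ ≤ KB * |ω' - ω| := by
      simp only [sub_self]
      rw [norm_zero]
      positivity
    have hmain := myAssemble (C μ * V) (C μ * V) (Wᴴ * D (μ, ω) * V) (Wᴴ * D (μ, ω') * V)
      (Wᴴ * B μ) (Wᴴ * B μ) hU hU' g MB MC |ω' - ω| KC KD KB hg0.le hMB0 hMC0 ht0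
      hKC0 hKD0 hKB0 hG hG' (hCb μ hμ) (hBb μ hμ) hdP hdA hdR
    refine hmain.trans ?_
    apply mul_le_mul_of_nonneg_right _ ht0
    linarith
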